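/- Let M be a k×(k−1) blowup matrix (obtained from the initial 2×1 matrix with rows (0), (1) by a finite sequence of exterior and interior matrix blowups), and let m = (m_1, …, m_k) be any k-tuple of nonnegative integers. Let M(m) be the matrix obtained from M by appending, for each 1 ≤ s ≤ k, exactly m_s copies of the column whose first s entries (from the top) are 1 and whose remaining k−s entries are 0. Then the row-reversal of M(m) (rows read from bottom to top) is a CQS matrix. -/

import Mathlib

/-- Standard inner product of two integer vectors given as lists. -/
def innerL (v w : List ℤ) : ℤ := (List.zipWith (· * ·) v w).sum

/-- A matrix, given as its list of rows `v_1, …, v_r` (top to bottom), is a CQS matrix if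
`r ≥ 2` and `⟨v_i, v_j⟩ = ⟨v_i, v_i⟩ - 1` for all `1 ≤ i < j ≤ r`. -/
def IsCQS (rows : List (List ℤ)) : Prop :=
  2 ≤ rows.length ∧
    ∀ i j : ℕ, i < j → j < rows.length →
      innerL (rows.getD i []) (rows.getD j []) = innerL (rows.getD i []) (rows.getD i []) - 1

/-- Append the entries of `col` to the corresponding rows, i.e. append a column. -/
def rowAppendCol (rows : List (List ℤ)) (col : List ℤ) : List (List ℤ) :=
  List.zipWith (fun r c => r ++ [c]) rows col

/-- Exterior matrix blowup: keep `M` as the top-left block; the new last row is zero except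
for a `1` in its last entry. -/
def exteriorMB (M : List (List ℤ)) : List (List ℤ) :=
  M.map (fun row => row ++ [0]) ++ [List.replicate (M.length - 1) 0 ++ [1]]

/-- Interior matrix blowup at the `i`-th term (`1 ≤ i ≤ r - 1`): insert immediately below the
`(i+1)`-st row a copy of the `(i+1)`-st row, then append a last column whose `j`-th entry is
`1` for `1 ≤ j ≤ i`, `0` for `j = i+1`, `1` for `j = i+2`, and `0` for `j > i+2`. -/
def interiorMB (M : List (List ℤ)) (i : ℕ) : List (List ℤ) :=
  rowAppendCol (M.take (i + 1) ++ [M.getD i []] ++ M.drop (i + 1))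
    (List.replicate i 1 ++ [0, 1] ++ List.replicate (M.length - i - 1) 0)

/-- Blowup matrices: obtained from the initial `2 × 1` matrix with rows `(0)`, `(1)` by a
finite sequence of exterior and interior matrix blowups. -/
inductive IsBlowupMatrix : List (List ℤ) → Prop
  | base : IsBlowupMatrix [[0], [1]]
  | exterior : ∀ M : List (List ℤ), IsBlowupMatrix M → IsBlowupMatrix (exteriorMB M)
  | interior : ∀ (M : List (List ℤ)) (i : ℕ), 1 ≤ i → i < M.length →
      IsBlowupMatrix M → IsBlowupMatrix (interiorMB M i)

/-- `extendCols M m` is the matrix `M(m)` obtained from `M` (with `k` rows) by appending,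
for each `1 ≤ s ≤ k`, exactly `m_s` copies of the column whose first `s` entries (from the
top) are `1` and whose remaining entries are `0`. -/
def extendCols (M : List (List ℤ)) (m : List ℕ) : List (List ℤ) :=
  M.mapIdx (fun i row =>
    row ++ (List.range m.length).flatMap
      (fun s => List.replicate (m.getD s 0) (if i ≤ s then (1 : ℤ) else 0)))

lemma innerL_append (v w x y : List ℤ) (h : v.length = w.length) :
    innerL (v ++ x) (w ++ y) = innerL v w + innerL x y := by
  unfold innerL
  rw [List.zipWith_append h, List.sum_append]

lemma innerL_concat (v w : List ℤ) (c d : ℤ) (h : v.length = w.length) :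
    innerL (v ++ [c]) (w ++ [d]) = innerL v w + c * d := by
  rw [innerL_append _ _ _ _ h]; simp [innerL]

lemma innerL_replicate_zero (n : ℕ) (w : List ℤ) :
    innerL (List.replicate n 0) w = 0 := by
  induction n generalizing w with
  | zero => simp [innerL]
  | succ k ih =>
    cases w with
    | nil => simp [innerL]
    | cons a t => simpa [innerL, List.replicate_succ] using ih t

lemma innerL_replicate (n : ℕ) (x y : ℤ) :
    innerL (List.replicate n x) (List.replicate n y) = n * (x * y) := by
  induction n with
  | zero => simp [innerL]
  | succ k ih =>
    simp only [List.replicate_succ, innerL, List.zipWith_cons_cons, List.sum_cons] at *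
    rw [ih]; push_cast; ring


/-- Full invariant: at least 2 rows, each row has length `k-1`, and every lower row has
inner product with every higher row equal to its own norm minus 1. -/
def Good (M : List (List ℤ)) : Prop :=
  2 ≤ M.length ∧ (∀ r ∈ M, r.length = M.length - 1) ∧
    ∀ a b : ℕ, b < a → a < M.length →
      innerL (M.getD a []) (M.getD b []) = innerL (M.getD a []) (M.getD a []) - 1

lemma good_ext (M : List (List ℤ)) (hG : Good M) : Good (exteriorMB M) := by
  obtain ⟨h2, hlen, hP⟩ := hG
  have hlenE : (exteriorMB M).length = M.length + 1 := by simp [exteriorMB]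
  have hrow : ∀ j, j < M.length → (exteriorMB M).getD j [] = M.getD j [] ++ [0] := by
    intro j hj
    rw [List.getD_eq_getElem _ _ (by simp [hlenE]; omega)]
    simp only [exteriorMB]
    rw [List.getElem_append_left (by simpa using hj), List.getElem_map,
      List.getD_eq_getElem _ _ hj]
  have hlast : (exteriorMB M).getD M.length [] = List.replicate (M.length - 1) 0 ++ [1] := by
    rw [List.getD_eq_getElem _ _ (by omega)]
    simp only [exteriorMB]
    rw [List.getElem_append_right (by simp)]
    simp
  have hmem : ∀ j, j < M.length → (M.getD j []).length = M.length - 1 := by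
    intro j hj
    apply hlen
    rw [List.getD_eq_getElem _ _ hj]
    exact List.getElem_mem _
  refine ⟨by omega, ?_, ?_⟩
  · intro r hr
    rw [List.mem_iff_getElem] at hr
    obtain ⟨n, hn, rfl⟩ := hr
    rw [hlenE] at hn
    rcases Nat.lt_or_ge n M.length with h | h
    · rw [← List.getD_eq_getElem _ [] , hrow n h, hlenE, List.length_append,
        hmem n h, List.length_singleton]
      omega
    · have : n = M.length := by omega
      subst this
      rw [← List.getD_eq_getElem _ [], hlast, hlenE, List.length_append,
        List.length_replicate, List.length_singleton]
      omega
  · intro a b hba ha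
    rw [hlenE] at ha
    rcases Nat.lt_or_ge a M.length with h | h
    · rw [hrow a h, hrow b (by omega),
        innerL_concat _ _ _ _ (by rw [hmem a h, hmem b (by omega)]),
        innerL_concat _ _ _ _ rfl]
      rw [hP a b hba h]; ring
    · have : a = M.length := by omega
      subst this
      rw [hlast, hrow b (by omega),
        innerL_concat _ _ _ _ (by rw [hmem b (by omega)]; simp),
        innerL_concat _ _ _ _ rfl]
      rw [innerL_replicate_zero, innerL_replicate_zero]; ring

lemma good_int (M : List (List ℤ)) (i : ℕ) (hi1 : 1 ≤ i) (hi : i < M.length)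
    (hG : Good M) : Good (interiorMB M i) := by
  obtain ⟨h2, hlen, hP⟩ := hG
  set k := M.length with hk
  have hmem : ∀ j, j < k → (M.getD j []).length = k - 1 := by
    intro j hj
    apply hlen
    rw [List.getD_eq_getElem _ _ hj]
    exact List.getElem_mem _
  have hNlen : (M.take (i + 1) ++ [M.getD i []] ++ M.drop (i + 1)).length = k + 1 := by
    simp; omega
  have hclen : (List.replicate i (1:ℤ) ++ [0, 1] ++ List.replicate (k - i - 1) 0).length
      = k + 1 := by
    simp; omega
  have hIlen : (interiorMB M i).length = k + 1 := by
    rw [interiorMB, rowAppendCol, List.length_zipWith, hNlen, hclen]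
    simp
  have hrow : ∀ j, j < k + 1 → (interiorMB M i).getD j []
      = M.getD (if j ≤ i then j else j - 1) []
        ++ [if j < i ∨ j = i + 1 then (1:ℤ) else 0] := by
    intro j hj
    rw [List.getD_eq_getElem _ _ (by omega : j < (interiorMB M i).length)]
    simp only [interiorMB, rowAppendCol]
    rw [List.getElem_zipWith]
    congr 1
    · -- the row part
      rcases Nat.lt_or_ge j (i + 1) with h | h
      · rw [List.getElem_append_left (by simp only [List.length_append,
            List.length_take, List.length_singleton]; omega)]
        rw [List.getElem_append_left (by simp only [List.length_take]; omega)]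
        have hidx : (if j ≤ i then j else j - 1) = j := if_pos (by omega)
        rw [List.getElem_take, hidx, ← List.getD_eq_getElem _ []]
      · rcases Nat.eq_or_lt_of_le h with h' | h'
        · rw [List.getElem_append_left (by simp only [List.length_append,
              List.length_take, List.length_singleton]; omega)]
          rw [List.getElem_append_right (by simp only [List.length_take]; omega)]
          have hidx : (if j ≤ i then j else j - 1) = i := by
            rw [if_neg (by omega)]; omega
          rw [List.getElem_singleton, hidx]
          
        · rw [List.getElem_append_right (by simp only [List.length_append,
              List.length_take, List.length_singleton]; omega)]
          have hidx : (if j ≤ i then j else j - 1) = j - 1 := if_neg (by omega)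
          rw [List.getElem_drop, hidx, ← List.getD_eq_getElem _ []]
          congr 1
          simp only [List.length_append, List.length_take, List.length_singleton]
          omega
    · -- the column entry
      congr 1
      rcases Nat.lt_or_ge j i with h | h
      · rw [List.getElem_append_left (by simp only [List.length_append,
            List.length_replicate, List.length_cons, List.length_nil]; omega)]
        rw [List.getElem_append_left (by simp only [List.length_replicate]; omega)]
        rw [List.getElem_replicate, if_pos (Or.inl h)]
      · have hXlen : (List.replicate i (1:ℤ) ++ [0, 1]).length = i + 2 := by
          simp
        rcases Nat.eq_or_lt_of_le h with h' | h'
        · rw [List.getElem_append_left (by rw [hXlen]; omega)]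
          rw [List.getElem_append_right (by simp only [List.length_replicate]; omega)]
          have hz : j - (List.replicate i (1:ℤ)).length = 0 := by
            simp only [List.length_replicate]; omega
          have hv : (if j < i ∨ j = i + 1 then (1:ℤ) else 0) = 0 := if_neg (by omega)
          rw [← List.getD_eq_getElem _ 0, hz, hv]
          rfl
        · rcases Nat.eq_or_lt_of_le h' with h'' | h''
          · rw [List.getElem_append_left (by rw [hXlen]; omega)]
            rw [List.getElem_append_right (by simp only [List.length_replicate]; omega)]
            have hz : j - (List.replicate i (1:ℤ)).length = 1 := by
              simp only [List.length_replicate]; omega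
            have hv : (if j < i ∨ j = i + 1 then (1:ℤ) else 0) = 1 :=
              if_pos (Or.inr (by omega))
            rw [← List.getD_eq_getElem _ 0, hz, hv]
            rfl
          · rw [List.getElem_append_right (by rw [hXlen]; omega)]
            rw [List.getElem_replicate, if_neg (by omega)]
  refine ⟨by omega, ?_, ?_⟩
  · intro r hr
    rw [List.mem_iff_getElem] at hr
    obtain ⟨n, hn, rfl⟩ := hr
    rw [hIlen] at hn
    rw [← List.getD_eq_getElem _ [], hrow n hn, hIlen, List.length_append,
      hmem _ (by split <;> omega), List.length_singleton]
    omega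
  · intro a b hba ha
    rw [hIlen] at ha
    rw [hrow a ha, hrow b (by omega)]
    set sa := if a ≤ i then a else a - 1 with hsa
    set sb := if b ≤ i then b else b - 1 with hsb
    have hsal : sa < k := by rw [hsa]; split <;> omega
    have hsbl : sb < k := by rw [hsb]; split <;> omega
    rw [innerL_concat _ _ _ _ (by rw [hmem _ hsal, hmem _ hsbl]),
      innerL_concat _ _ _ _ rfl]
    rcases Nat.lt_or_ge sb sa with hlt | hge
    · rw [hP sa sb hlt hsal]
      have : (if a < i ∨ a = i + 1 then (1:ℤ) else 0) * (if b < i ∨ b = i + 1 then (1:ℤ) else 0)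
          = (if a < i ∨ a = i + 1 then (1:ℤ) else 0) * (if a < i ∨ a = i + 1 then (1:ℤ) else 0) := by
        by_cases hA : a < i ∨ a = i + 1
        · rw [if_pos hA]
          have hB : b < i ∨ b = i + 1 := by
            rcases hA with hA | hA
            · left; omega
            · left
              rw [hsa, hsb] at hlt
              subst hA
              simp only [if_neg (by omega : ¬ (i+1 ≤ i))] at hlt
              split at hlt <;> omega
          rw [if_pos hB]
        · rw [if_neg hA]; ring
      rw [this]; ring
    · -- sa ≤ sb with b < a forces a = i+1, b = i
      have hcol : a = i + 1 ∧ b = i := by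
        rw [hsa, hsb] at hge
        split at hge <;> split at hge <;> omega
      obtain ⟨ha', hb'⟩ := hcol
      have hsa' : sa = i := by rw [hsa]; split <;> omega
      have hsb' : sb = i := by rw [hsb]; split <;> omega
      have hva : (if a < i ∨ a = i + 1 then (1:ℤ) else 0) = 1 := if_pos (Or.inr ha')
      have hvb : (if b < i ∨ b = i + 1 then (1:ℤ) else 0) = 0 := if_neg (by omega)
      rw [hsa', hsb', hva, hvb]
      ring

lemma good_of_blowup (M : List (List ℤ)) (hM : IsBlowupMatrix M) : Good M := by
  induction hM with
  | base =>
    refine ⟨by simp, by intro r hr; simp at hr; rcases hr with rfl | rfl <;> simp, ?_⟩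
    intro a b hba ha
    simp at ha
    interval_cases a <;> interval_cases b <;> simp [innerL]
  | exterior M _ ih => exact good_ext M ih
  | interior M i hi1 hi _ ih => exact good_int M i hi1 hi ih

lemma innerL_flatMap (n : ℕ) (k : ℕ → ℕ) (f g h : ℕ → ℤ)
    (hfg : ∀ s, s < n → f s * g s = f s * h s) :
    innerL ((List.range n).flatMap fun s => List.replicate (k s) (f s))
      ((List.range n).flatMap fun s => List.replicate (k s) (g s))
    = innerL ((List.range n).flatMap fun s => List.replicate (k s) (f s))
      ((List.range n).flatMap fun s => List.replicate (k s) (h s)) := by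
  induction n with
  | zero => simp
  | succ n ih =>
    have hl : ∀ F : ℕ → ℤ,
        ((List.range n).flatMap fun s => List.replicate (k s) (F s)).length
        = ((List.range n).map k).sum := by
      intro F
      rw [List.length_flatMap]
      congr 1
      simp [Function.comp]
    rw [List.range_succ, List.flatMap_append, List.flatMap_append, List.flatMap_append,
      innerL_append _ _ _ _ (by rw [hl, hl]), innerL_append _ _ _ _ (by rw [hl, hl]),
      ih (fun s hs => hfg s (by omega))]
    congr 1
    simp only [List.flatMap_cons, List.flatMap_nil, List.append_nil]
    rw [innerL_replicate, innerL_replicate, hfg n (by omega)]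


/-- If `M` is a blowup matrix with `k` rows and `m = (m_1, …, m_k)` is any `k`-tuple of
nonnegative integers, then the row-reversal of the extended matrix `M(m)` is a
CQS matrix. -/
theorem extendCols_reverse_isCQS (M : List (List ℤ)) (hM : IsBlowupMatrix M)
    (m : List ℕ) (hm : m.length = M.length) :
    IsCQS (extendCols M m).reverse := by
  obtain ⟨h2, hlen, hP⟩ := good_of_blowup M hM
  set n := M.length with hn
  set T : ℕ → List ℤ := fun j => (List.range m.length).flatMap
      (fun s => List.replicate (m.getD s 0) (if j ≤ s then (1 : ℤ) else 0)) with hT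
  have hmem : ∀ j, j < n → (M.getD j []).length = n - 1 := by
    intro j hj
    apply hlen
    rw [List.getD_eq_getElem _ _ hj]
    exact List.getElem_mem _
  have hElen : (extendCols M m).length = n := by simp [extendCols, hn]
  have hErow : ∀ j, j < n → (extendCols M m).getD j [] = M.getD j [] ++ T j := by
    intro j hj
    rw [List.getD_eq_getElem _ _ (by rw [hElen]; omega)]
    simp only [extendCols]
    rw [List.getElem_mapIdx, List.getD_eq_getElem _ _ hj]
  have hTlen : ∀ j j' : ℕ, (T j).length = (T j').length := by
    intro j j'
    rw [hT]
    simp only [List.length_flatMap]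
    congr 1
    simp [Function.comp]
  have hTinner : ∀ a b : ℕ, b ≤ a → innerL (T a) (T b) = innerL (T a) (T a) := by
    intro a b hba
    rw [hT]
    apply innerL_flatMap
    intro s hs
    by_cases hA : a ≤ s
    · rw [if_pos hA, if_pos (by omega : b ≤ s)]
    · rw [if_neg hA]; ring
  refine ⟨by rw [List.length_reverse, hElen]; omega, ?_⟩
  intro i j hij hj
  rw [List.length_reverse, hElen] at hj
  have hrev : ∀ p, p < n → (extendCols M m).reverse.getD p [] = (extendCols M m).getD (n - 1 - p) [] := by
    intro p hp
    rw [List.getD_eq_getElem _ _ (by rw [List.length_reverse, hElen]; omega),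
      List.getElem_reverse, ← List.getD_eq_getElem]
    congr 1
    rw [hElen]
  rw [hrev i (by omega), hrev j hj]
  set a := n - 1 - i with ha
  set b := n - 1 - j with hb
  have hba : b < a := by omega
  have han : a < n := by omega
  rw [hErow a han, hErow b (by omega)]
  rw [innerL_append _ _ _ _ (by rw [hmem a han, hmem b (by omega)]),
    innerL_append _ _ _ _ rfl]
  rw [hP a b hba han, hTinner a b (by omega)]
  ring
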